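/- Let T be a very generic tetrahedron of flags in CP² with edge coordinates z_{ij} and face coordinates z_{ijk}, and let T* be its dual tetrahedron with edge coordinates z*_{ij}. Then for every even permutation (i,j,k,l) of (1,2,3,4), z*_{ij} = z_{ji} · (1 - z_{ik} z_{jk} z_{lk}) / (1 - 1/(z_{il} z_{jl} z_{kl})) = z_{ji} · (1 + z_{jil}) / (1 + 1/z_{ijk}). -/

import Mathlib

/-- Pairing of a covector and a vector in `ℂ³`. -/
noncomputable def dot (f x : Fin 3 → ℂ) : ℂ := ∑ t, f t * x t

/-- Determinant of three vectors of `ℂ³` (as rows). -/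
noncomputable def det3 (a b c : Fin 3 → ℂ) : ℂ := Matrix.det (Matrix.of ![a, b, c])

/-- A generic tetrahedron of flags in `ℂP²`: four points `[xᵢ]` and four
lines `[fᵢ]` with `fᵢ(xᵢ) = 0`, `fᵢ(xⱼ) ≠ 0` for `i ≠ j`, and no three of
the points collinear. -/
structure FlagTetra where
  x : Fin 4 → Fin 3 → ℂ
  f : Fin 4 → Fin 3 → ℂ
  flag : ∀ i, dot (f i) (x i) = 0
  generic_pairing : ∀ i j, i ≠ j → dot (f i) (x j) ≠ 0
  generic_pts : ∀ i j k : Fin 4, i ≠ j → j ≠ k → i ≠ k → det3 (x i) (x j) (x k) ≠ 0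

/-- A very generic tetrahedron of flags: in addition no three of the
lines `[fᵢ]` are concurrent. -/
structure VGTetra extends FlagTetra where
  generic_lines : ∀ i j k : Fin 4, i ≠ j → j ≠ k → i ≠ k → det3 (f i) (f j) (f k) ≠ 0

/-- The edge coordinate `z_{ij}(T)`, computed with respect to an even
permutation `(i,j,k,l)` of the vertices:
`z_{ij} = (fᵢ(x_k)·det(xᵢ,xⱼ,x_l)) / (fᵢ(x_l)·det(xᵢ,xⱼ,x_k))`. -/
noncomputable def zEdge (T : FlagTetra) (i j k l : Fin 4) : ℂ :=
  (dot (T.f i) (T.x k) * det3 (T.x i) (T.x j) (T.x l)) /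
    (dot (T.f i) (T.x l) * det3 (T.x i) (T.x j) (T.x k))

/-- The face coordinate (triple ratio) `z_{ijk}(T)`. -/
noncomputable def zFace (T : FlagTetra) (i j k : Fin 4) : ℂ :=
  (dot (T.f i) (T.x j) * dot (T.f j) (T.x k) * dot (T.f k) (T.x i)) /
    (dot (T.f i) (T.x k) * dot (T.f j) (T.x i) * dot (T.f k) (T.x j))

/-- The edge coordinate `z*_{ij}` of the dual tetrahedron `T*`, obtained by
replacing each flag `([x],[f])` by `([f],[x])` in the dual projective plane. -/
noncomputable def zEdgeDual (T : FlagTetra) (i j k l : Fin 4) : ℂ :=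
  (dot (T.f k) (T.x i) * det3 (T.f i) (T.f j) (T.f l)) /
    (dot (T.f l) (T.x i) * det3 (T.f i) (T.f j) (T.f k))

lemma det_mul_det (a b c d e g : Fin 3 → ℂ) :
    det3 a b c * det3 d e g =
      dot a d * (dot b e * dot c g - dot b g * dot c e)
      - dot a e * (dot b d * dot c g - dot b g * dot c d)
      + dot a g * (dot b d * dot c e - dot b e * dot c d) := by
  simp [det3, dot, Matrix.det_fin_three, Fin.sum_univ_three]; ring

lemma key (T : VGTetra) (i j k l : Fin 4)
    (hij : i ≠ j) (hik : i ≠ k) (hil : i ≠ l)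
    (hjk : j ≠ k) (hjl : j ≠ l) (hkl : k ≠ l) :
    zEdgeDual T.toFlagTetra i j k l =
      zEdge T.toFlagTetra j i l k *
        (1 - zEdge T.toFlagTetra i k l j *
             zEdge T.toFlagTetra j k i l *
             zEdge T.toFlagTetra l k j i) /
        (1 - 1 / (zEdge T.toFlagTetra i l j k *
                  zEdge T.toFlagTetra j l k i *
                  zEdge T.toFlagTetra k l i j)) ∧
    zEdgeDual T.toFlagTetra i j k l =
      zEdge T.toFlagTetra j i l k *
        (1 + zFace T.toFlagTetra j i l) /
        (1 + 1 / zFace T.toFlagTetra i j k) := by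
  set S := T.toFlagTetra with hS
  -- nonzero pairings
  have aij := S.generic_pairing i j hij
  have aji := S.generic_pairing j i (Ne.symm hij)
  have aik := S.generic_pairing i k hik
  have aki := S.generic_pairing k i (Ne.symm hik)
  have ail := S.generic_pairing i l hil
  have ali := S.generic_pairing l i (Ne.symm hil)
  have ajk := S.generic_pairing j k hjk
  have akj := S.generic_pairing k j (Ne.symm hjk)
  have ajl := S.generic_pairing j l hjl
  have alj := S.generic_pairing l j (Ne.symm hjl)
  have akl := S.generic_pairing k l hkl
  have alk := S.generic_pairing l k (Ne.symm hkl)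
  -- nonzero determinants of points
  have hD4 : det3 (S.x i) (S.x j) (S.x k) ≠ 0 := S.generic_pts i j k hij hjk hik
  have hD3 : det3 (S.x i) (S.x j) (S.x l) ≠ 0 := S.generic_pts i j l hij hjl hil
  have hD2 : det3 (S.x i) (S.x k) (S.x l) ≠ 0 := S.generic_pts i k l hik hkl hil
  have hD1 : det3 (S.x j) (S.x k) (S.x l) ≠ 0 := S.generic_pts j k l hjk hkl hjl
  have hFk : det3 (S.f i) (S.f j) (S.f k) ≠ 0 := T.generic_lines i j k hij hjk hik
  have hFl : det3 (S.f i) (S.f j) (S.f l) ≠ 0 := T.generic_lines i j l hij hjl hil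
  -- determinant rewrites to canonical order
  have e1 : det3 (S.x j) (S.x i) (S.x l) = -det3 (S.x i) (S.x j) (S.x l) := by
    simp [det3, Matrix.det_fin_three]; ring
  have e2 : det3 (S.x j) (S.x i) (S.x k) = -det3 (S.x i) (S.x j) (S.x k) := by
    simp [det3, Matrix.det_fin_three]; ring
  have e3 : det3 (S.x i) (S.x k) (S.x j) = -det3 (S.x i) (S.x j) (S.x k) := by
    simp [det3, Matrix.det_fin_three]; ring
  have e4 : det3 (S.x j) (S.x k) (S.x i) = det3 (S.x i) (S.x j) (S.x k) := by
    simp [det3, Matrix.det_fin_three]; ring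
  have e5 : det3 (S.x l) (S.x k) (S.x i) = -det3 (S.x i) (S.x k) (S.x l) := by
    simp [det3, Matrix.det_fin_three]; ring
  have e6 : det3 (S.x l) (S.x k) (S.x j) = -det3 (S.x j) (S.x k) (S.x l) := by
    simp [det3, Matrix.det_fin_three]; ring
  have e7 : det3 (S.x i) (S.x l) (S.x k) = -det3 (S.x i) (S.x k) (S.x l) := by
    simp [det3, Matrix.det_fin_three]; ring
  have e8 : det3 (S.x i) (S.x l) (S.x j) = -det3 (S.x i) (S.x j) (S.x l) := by
    simp [det3, Matrix.det_fin_three]; ring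
  have e9 : det3 (S.x j) (S.x l) (S.x i) = det3 (S.x i) (S.x j) (S.x l) := by
    simp [det3, Matrix.det_fin_three]; ring
  have e10 : det3 (S.x j) (S.x l) (S.x k) = -det3 (S.x j) (S.x k) (S.x l) := by
    simp [det3, Matrix.det_fin_three]; ring
  have e11 : det3 (S.x k) (S.x l) (S.x j) = det3 (S.x j) (S.x k) (S.x l) := by
    simp [det3, Matrix.det_fin_three]; ring
  have e12 : det3 (S.x k) (S.x l) (S.x i) = det3 (S.x i) (S.x k) (S.x l) := by
    simp [det3, Matrix.det_fin_three]; ring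
  -- key determinant-product relations (using the flag conditions)
  have hNk : det3 (S.f i) (S.f j) (S.f k) * det3 (S.x i) (S.x j) (S.x k) =
      dot (S.f i) (S.x j) * dot (S.f j) (S.x k) * dot (S.f k) (S.x i)
      + dot (S.f i) (S.x k) * dot (S.f j) (S.x i) * dot (S.f k) (S.x j) := by
    rw [det_mul_det, S.flag i, S.flag j, S.flag k]; ring
  have hNl : det3 (S.f i) (S.f j) (S.f l) * det3 (S.x i) (S.x j) (S.x l) =
      dot (S.f i) (S.x j) * dot (S.f j) (S.x l) * dot (S.f l) (S.x i)
      + dot (S.f i) (S.x l) * dot (S.f j) (S.x i) * dot (S.f l) (S.x j) := by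
    rw [det_mul_det, S.flag i, S.flag j, S.flag l]; ring
  have hNk' : dot (S.f i) (S.x j) * dot (S.f j) (S.x k) * dot (S.f k) (S.x i)
      + dot (S.f i) (S.x k) * dot (S.f j) (S.x i) * dot (S.f k) (S.x j) ≠ 0 := by
    rw [← hNk]; exact mul_ne_zero hFk hD4
  have hNl' : dot (S.f i) (S.x j) * dot (S.f j) (S.x l) * dot (S.f l) (S.x i)
      + dot (S.f i) (S.x l) * dot (S.f j) (S.x i) * dot (S.f l) (S.x j) ≠ 0 := by
    rw [← hNl]; exact mul_ne_zero hFl hD3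
  have hFkEq : det3 (S.f i) (S.f j) (S.f k) =
      (dot (S.f i) (S.x j) * dot (S.f j) (S.x k) * dot (S.f k) (S.x i)
      + dot (S.f i) (S.x k) * dot (S.f j) (S.x i) * dot (S.f k) (S.x j)) /
        det3 (S.x i) (S.x j) (S.x k) := by
    rw [eq_div_iff hD4]; exact hNk
  have hFlEq : det3 (S.f i) (S.f j) (S.f l) =
      (dot (S.f i) (S.x j) * dot (S.f j) (S.x l) * dot (S.f l) (S.x i)
      + dot (S.f i) (S.x l) * dot (S.f j) (S.x i) * dot (S.f l) (S.x j)) /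
        det3 (S.x i) (S.x j) (S.x l) := by
    rw [eq_div_iff hD3]; exact hNl
  -- second conjunct
  have h2 : zEdgeDual S i j k l =
      zEdge S j i l k * (1 + zFace S j i l) / (1 + 1 / zFace S i j k) := by
    have hP : 1 + 1 / zFace S i j k =
        (dot (S.f i) (S.x j) * dot (S.f j) (S.x k) * dot (S.f k) (S.x i)
        + dot (S.f i) (S.x k) * dot (S.f j) (S.x i) * dot (S.f k) (S.x j)) /
          (dot (S.f i) (S.x j) * dot (S.f j) (S.x k) * dot (S.f k) (S.x i)) := by
      rw [zFace]; field_simp; try ring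
    have hQ : 1 + zFace S j i l =
        (dot (S.f i) (S.x j) * dot (S.f j) (S.x l) * dot (S.f l) (S.x i)
        + dot (S.f i) (S.x l) * dot (S.f j) (S.x i) * dot (S.f l) (S.x j)) /
          (dot (S.f j) (S.x l) * dot (S.f i) (S.x j) * dot (S.f l) (S.x i)) := by
      rw [zFace]; field_simp
    have hC : 1 + 1 / zFace S i j k ≠ 0 := by
      rw [hP]; exact div_ne_zero hNk' (mul_ne_zero (mul_ne_zero aij ajk) aki)
    rw [zEdgeDual, zEdge, eq_div_iff hC, hP, hQ, hFkEq, hFlEq, e1, e2]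
    have hNk'' : dot (S.f k) (S.x i) * dot (S.f i) (S.x j) * dot (S.f j) (S.x k) +
        dot (S.f j) (S.x i) * dot (S.f i) (S.x k) * dot (S.f k) (S.x j) ≠ 0 := by
      convert hNk' using 1; ring
    field_simp
  refine ⟨?_, h2⟩
  -- products of edge coordinates
  have p1 : zEdge S i k l j * zEdge S j k i l * zEdge S l k j i = -zFace S j i l := by
    simp only [zEdge, zFace, e3, e4, e5, e6]
    field_simp
    try ring
  have p2 : zEdge S i l j k * zEdge S j l k i * zEdge S k l i j = -zFace S i j k := by
    simp only [zEdge, zFace, e7, e8, e9, e10, e11, e12]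
    field_simp
    try ring
  rw [p1, p2]
  have : (1 : ℂ) - 1 / -zFace S i j k = 1 + 1 / zFace S i j k := by
    rw [div_neg]; ring
  rw [this, sub_neg_eq_add]
  exact h2

/-- Duality formula for edge coordinates: for a very generic tetrahedron of
flags and an even permutation `(i,j,k,l)` of the vertices,
`z*_{ij} = z_{ji}(1 - z_{ik}z_{jk}z_{lk})/(1 - 1/(z_{il}z_{jl}z_{kl}))
        = z_{ji}(1 + z_{jil})/(1 + 1/z_{ijk})`. -/
theorem zEdgeDual_formula (T : VGTetra) (σ : Equiv.Perm (Fin 4))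
    (hσ : σ.sign = 1) :
    zEdgeDual T.toFlagTetra (σ 0) (σ 1) (σ 2) (σ 3) =
      zEdge T.toFlagTetra (σ 1) (σ 0) (σ 3) (σ 2) *
        (1 - zEdge T.toFlagTetra (σ 0) (σ 2) (σ 3) (σ 1) *
             zEdge T.toFlagTetra (σ 1) (σ 2) (σ 0) (σ 3) *
             zEdge T.toFlagTetra (σ 3) (σ 2) (σ 1) (σ 0)) /
        (1 - 1 / (zEdge T.toFlagTetra (σ 0) (σ 3) (σ 1) (σ 2) *
                  zEdge T.toFlagTetra (σ 1) (σ 3) (σ 2) (σ 0) *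
                  zEdge T.toFlagTetra (σ 2) (σ 3) (σ 0) (σ 1))) ∧
    zEdgeDual T.toFlagTetra (σ 0) (σ 1) (σ 2) (σ 3) =
      zEdge T.toFlagTetra (σ 1) (σ 0) (σ 3) (σ 2) *
        (1 + zFace T.toFlagTetra (σ 1) (σ 0) (σ 3)) /
        (1 + 1 / zFace T.toFlagTetra (σ 0) (σ 1) (σ 2)) := by
  have h01 : σ 0 ≠ σ 1 := fun h => absurd (σ.injective h) (by decide)
  have h02 : σ 0 ≠ σ 2 := fun h => absurd (σ.injective h) (by decide)
  have h03 : σ 0 ≠ σ 3 := fun h => absurd (σ.injective h) (by decide)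
  have h12 : σ 1 ≠ σ 2 := fun h => absurd (σ.injective h) (by decide)
  have h13 : σ 1 ≠ σ 3 := fun h => absurd (σ.injective h) (by decide)
  have h23 : σ 2 ≠ σ 3 := fun h => absurd (σ.injective h) (by decide)
  exact key T (σ 0) (σ 1) (σ 2) (σ 3) h01 h02 h03 h12 h13 h23
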